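/- arXiv:2106.04000 — 5 statements merged into one kernel-verified Lean document; each statement's English description precedes it below -/
import Mathlib

section
/- A function f : Λ → ℂ is discrete analytic if and only if for every closed path γ in Λ the discrete integral of f over γ vanishes: ∫_γ f δz = 0. -/
open Complex Finset GaussianInt

noncomputable section

/-- The lattice point `i` in the Gaussian integers. -/
def ii : GaussianInt := ⟨0, 1⟩

/-- `f` is discrete analytic on the whole lattice `Λ = ℤ + iℤ`. -/
def DAnalytic (f : GaussianInt → ℂ) : Prop :=
  ∀ z : GaussianInt,
    (f (z + 1 + ii) - f z) / (1 + Complex.I) = (f (z + 1) - f (z + ii)) / (1 - Complex.I)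

/-- `f` is discrete analytic on the right half lattice `Λ₊ = {z : Re z ≥ 0}`. -/
def DAnalyticOn (f : GaussianInt → ℂ) : Prop :=
  ∀ z : GaussianInt, 0 ≤ z.re →
    (f (z + 1 + ii) - f z) / (1 + Complex.I) = (f (z + 1) - f (z + ii)) / (1 - Complex.I)

/-- `γ 0, γ 1, …, γ n` is a path in the lattice from `a` to `b`:
consecutive points are at distance `1`. -/
def IsPath (γ : ℕ → GaussianInt) (n : ℕ) (a b : GaussianInt) : Prop :=
  γ 0 = a ∧ γ n = b ∧ ∀ k < n, ‖(γ (k + 1) : ℂ) - (γ k : ℂ)‖ = 1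

/-- The discrete integral `∫_γ f δz` along the path `γ 0, …, γ n`. -/
def discInt (f : GaussianInt → ℂ) (γ : ℕ → GaussianInt) (n : ℕ) : ℂ :=
  ∑ k ∈ Finset.range n, ((f (γ k) + f (γ (k + 1))) / 2) * ((γ (k + 1) : ℂ) - (γ k : ℂ))

/-- The canonical lattice path from `0` to `z`: first along the real axis, then vertically. -/
def cpath (z : GaussianInt) (k : ℕ) : GaussianInt :=
  ⟨z.re.sign * ((min k z.re.natAbs : ℕ) : ℤ),
   z.im.sign * ((min k (z.re.natAbs + z.im.natAbs) - z.re.natAbs : ℕ) : ℤ)⟩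

/-- The length of the canonical path from `0` to `z`. -/
def cpathLen (z : GaussianInt) : ℕ := z.re.natAbs + z.im.natAbs

/-- The operator `Z`: `Zf(z) = (f(0) - f(z))/2 + ∫_0^z f δz`, the integral being taken
along the canonical path (for discrete analytic `f` the integral is path-independent). -/
def Zop (f : GaussianInt → ℂ) : GaussianInt → ℂ := fun z =>
  (f 0 - f z) / 2 + discInt f (cpath z) (cpathLen z)

/-- The basic discrete analytic polynomials `z⁽ⁿ⁾ = Zⁿ1`. -/
def zpoly (n : ℕ) : GaussianInt → ℂ := Zop^[n] (fun _ => 1)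

/-- `α₊ = (1+i)/2`. -/
def aPlus : ℂ := (1 + Complex.I) / 2
/-- `α₋ = (1-i)/2`. -/
def aMinus : ℂ := (1 - Complex.I) / 2

/-- The difference operator `δx`. -/
def dxOp (f : GaussianInt → ℂ) : GaussianInt → ℂ := fun z => f (z + 1) - f z
/-- The difference operator `δy`. -/
def dyOp (f : GaussianInt → ℂ) : GaussianInt → ℂ := fun z => f (z + ii) - f z

/-- `f` belongs to the Hardy space `H₂(Λ₊)` with coefficient sequence `c`:
`f(z) = Σ c(n) z⁽ⁿ⁾(z)` on `Λ₊` and `Σ |c(n)|² < ∞`. -/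
def MemH2 (f : GaussianInt → ℂ) (c : ℕ → ℂ) : Prop :=
  Summable (fun n => ‖c n‖ ^ 2) ∧
  ∀ z : GaussianInt, 0 ≤ z.re → HasSum (fun n => c n * zpoly n z) (f z)


-- helpers
def cumsum (h : ℤ → ℂ) : ℤ → ℂ := fun n =>
  ∑ k ∈ Finset.range n.toNat, h k - ∑ k ∈ Finset.range (-n).toNat, h (-(k+1))

lemma cumsum_zero (h : ℤ → ℂ) : cumsum h 0 = 0 := by simp [cumsum]

lemma cumsum_succ (h : ℤ → ℂ) (n : ℤ) : cumsum h (n+1) = cumsum h n + h n := by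
  rcases le_or_gt 0 n with hn | hn
  · simp only [cumsum]
    rw [show (-(n+1)).toNat = 0 from by omega, show (-n).toNat = 0 from by omega,
      show (n+1).toNat = n.toNat + 1 from by omega, Finset.sum_range_succ,
      Int.toNat_of_nonneg hn]
    simp
  · simp only [cumsum]
    rw [show (n+1).toNat = 0 from by omega, show n.toNat = 0 from by omega,
      show (-n).toNat = (-(n+1)).toNat + 1 from by omega, Finset.sum_range_succ,
      show -(((-(n+1)).toNat : ℤ)+1) = n from by omega]
    simp only [Finset.sum_range_zero]
    ring

lemma coe_ii : ((ii : GaussianInt) : ℂ) = Complex.I := by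
  simp [ii, toComplex_def']

lemma one_add_I_ne : (1 + Complex.I) ≠ 0 := by
  simp [Complex.ext_iff]

lemma one_sub_I_ne : (1 - Complex.I) ≠ 0 := by
  simp [Complex.ext_iff]

def prim (f : GaussianInt → ℂ) (z : GaussianInt) : ℂ :=
  cumsum (fun x => (f ⟨x,0⟩ + f ⟨x+1,0⟩)/2) z.re
  + cumsum (fun y => Complex.I * ((f ⟨z.re, y⟩ + f ⟨z.re, y+1⟩)/2)) z.im

lemma prim_vert (f : GaussianInt → ℂ) (x y : ℤ) :
    prim f ⟨x, y+1⟩ = prim f ⟨x, y⟩ + Complex.I * ((f ⟨x,y⟩ + f ⟨x,y+1⟩)/2) := by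
  simp only [prim]
  rw [cumsum_succ]
  ring

lemma square_rel (f : GaussianInt → ℂ) (hf : DAnalytic f) (x y : ℤ) :
    (f ⟨x+1,y+1⟩ - f ⟨x,y⟩) * (1 - Complex.I)
      = (f ⟨x+1,y⟩ - f ⟨x,y+1⟩) * (1 + Complex.I) := by
  have h := hf ⟨x,y⟩
  have e1 : (⟨x,y⟩ : GaussianInt) + 1 + ii = ⟨x+1,y+1⟩ := by
    simp [Zsqrtd.ext_iff, ii]
  have e2 : (⟨x,y⟩ : GaussianInt) + 1 = ⟨x+1,y⟩ := by
    simp [Zsqrtd.ext_iff]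
  have e3 : (⟨x,y⟩ : GaussianInt) + ii = ⟨x,y+1⟩ := by
    simp [Zsqrtd.ext_iff, ii]
  rw [e1, e2, e3, div_eq_div_iff one_add_I_ne one_sub_I_ne] at h
  exact h

lemma prim_horiz (f : GaussianInt → ℂ) (hf : DAnalytic f) (y x : ℤ) :
    prim f ⟨x+1, y⟩ = prim f ⟨x, y⟩ + (f ⟨x,y⟩ + f ⟨x+1,y⟩)/2 := by
  induction y using Int.induction_on with
  | zero =>
    simp only [prim]
    rw [cumsum_succ]
    simp [cumsum_zero]
  | succ n ih =>
    have hv1 := prim_vert f (x+1) n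
    have hv2 := prim_vert f x n
    have hsq := square_rel f hf x n
    linear_combination hv1 - hv2 + ih - (1/2) * hsq
  | pred n ih =>
    have h1 : (-(n:ℤ)-1) + 1 = -n := by ring
    have hv1 := prim_vert f (x+1) (-(n:ℤ)-1)
    have hv2 := prim_vert f x (-(n:ℤ)-1)
    have hsq := square_rel f hf x (-(n:ℤ)-1)
    rw [h1] at hv1 hv2 hsq
    linear_combination ih - hv1 + hv2 + (1/2) * hsq

lemma prim_add_one (f : GaussianInt → ℂ) (hf : DAnalytic f) (z : GaussianInt) :
    prim f (z+1) = prim f z + (f z + f (z+1))/2 := by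
  have h1 : z + 1 = (⟨z.re + 1, z.im⟩ : GaussianInt) := by
    simp [Zsqrtd.ext_iff]
  rw [h1]
  exact prim_horiz f hf z.im z.re

lemma prim_add_ii (f : GaussianInt → ℂ) (z : GaussianInt) :
    prim f (z+ii) = prim f z + Complex.I * ((f z + f (z+ii))/2) := by
  have h1 : z + ii = (⟨z.re, z.im + 1⟩ : GaussianInt) := by
    simp [Zsqrtd.ext_iff, ii]
  rw [h1]
  exact prim_vert f z.re z.im

lemma int_unit (a b : ℤ) (h : a*a + b*b = 1) :
    (a=1∧b=0)∨(a=-1∧b=0)∨(a=0∧b=1)∨(a=0∧b=-1) := by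
  have h1a : -1 ≤ a := by nlinarith
  have h2a : a ≤ 1 := by nlinarith
  have h1b : -1 ≤ b := by nlinarith
  have h2b : b ≤ 1 := by nlinarith
  interval_cases a <;> interval_cases b <;> omega

lemma unit_step (z w : GaussianInt) (h : ‖(w:ℂ) - z‖ = 1) :
    w = z + 1 ∨ w = z - 1 ∨ w = z + ii ∨ w = z - ii := by
  have hd : ((w - z : GaussianInt) : ℂ) = (w:ℂ) - z := toComplex_sub w z
  have h2 : Complex.normSq ((w - z : GaussianInt) : ℂ) = 1 := by
    rw [hd, ← Complex.sq_norm, h]; norm_num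
  rw [Complex.normSq_apply, ← GaussianInt.intCast_re, ← GaussianInt.intCast_im] at h2
  have hint : (w-z).re * (w-z).re + (w-z).im * (w-z).im = 1 := by exact_mod_cast h2
  have key := int_unit _ _ hint
  have hzw : w = z + (w - z) := by ring
  rcases key with ⟨h1, h2⟩ | ⟨h1, h2⟩ | ⟨h1, h2⟩ | ⟨h1, h2⟩
  · left
    rw [hzw]; congr 1
    simp [Zsqrtd.ext_iff, h1, h2]
  · right; left
    rw [hzw, show z - 1 = z + (-1) from by ring]; congr 1
    simp [Zsqrtd.ext_iff, h1, h2]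
  · right; right; left
    rw [hzw]; congr 1
    simp [Zsqrtd.ext_iff, h1, h2, ii]
  · right; right; right
    rw [hzw, show z - ii = z + (-ii) from by ring]; congr 1
    simp [Zsqrtd.ext_iff, h1, h2, ii]

lemma edge (f : GaussianInt → ℂ) (hf : DAnalytic f) (z w : GaussianInt)
    (h : ‖(w:ℂ) - z‖ = 1) :
    ((f z + f w)/2) * ((w:ℂ) - (z:ℂ)) = prim f w - prim f z := by
  rcases unit_step z w h with h1 | h1 | h1 | h1
  · subst h1
    have hc : ((z + 1 : GaussianInt) : ℂ) = (z:ℂ) + 1 := by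
      rw [toComplex_add, toComplex_one]
    rw [hc, prim_add_one f hf z]; ring
  · subst h1
    have hc : ((z - 1 : GaussianInt) : ℂ) = (z:ℂ) - 1 := by
      rw [toComplex_sub, toComplex_one]
    have hp := prim_add_one f hf (z-1)
    rw [show z - 1 + 1 = z from by ring] at hp
    rw [hc, hp]; ring
  · subst h1
    have hc : ((z + ii : GaussianInt) : ℂ) = (z:ℂ) + Complex.I := by
      rw [toComplex_add, coe_ii]
    rw [hc, prim_add_ii f z]; ring
  · subst h1
    have hc : ((z - ii : GaussianInt) : ℂ) = (z:ℂ) - Complex.I := by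
      rw [toComplex_sub, coe_ii]
    have hp := prim_add_ii f (z - ii)
    rw [show z - ii + ii = z from by ring] at hp
    rw [hc, hp]; ring


/-- A function `f : Λ → ℂ` is discrete analytic if and only if its discrete
integral over every closed path in `Λ` vanishes. -/
theorem stmt0 (f : GaussianInt → ℂ) :
    DAnalytic f ↔
      ∀ (γ : ℕ → GaussianInt) (n : ℕ) (a : GaussianInt),
        IsPath γ n a a → discInt f γ n = 0 := by
  constructor
  · rintro hf γ n a ⟨h0, hn, hstep⟩
    have : discInt f γ n = ∑ k ∈ Finset.range n, (prim f (γ (k+1)) - prim f (γ k)) :=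
      Finset.sum_congr rfl fun k hk =>
        edge f hf (γ k) (γ (k+1)) (hstep k (Finset.mem_range.mp hk))
    rw [this, Finset.sum_range_sub (fun k => prim f (γ k)) n, hn, h0, sub_self]
  · intro h z
    set γ : ℕ → GaussianInt := fun k =>
      if k = 0 then z else if k = 1 then z+1 else if k = 2 then z+1+ii
        else if k = 3 then z+ii else z with hγ
    have e1 : ((z + 1 : GaussianInt) : ℂ) = (z:ℂ) + 1 := by
      rw [toComplex_add, toComplex_one]
    have e2 : ((z + 1 + ii : GaussianInt) : ℂ) = (z:ℂ) + 1 + Complex.I := by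
      rw [toComplex_add, toComplex_add, toComplex_one, coe_ii]
    have e3 : ((z + ii : GaussianInt) : ℂ) = (z:ℂ) + Complex.I := by
      rw [toComplex_add, coe_ii]
    have hpath : IsPath γ 4 z z := by
      refine ⟨by simp [hγ], by simp [hγ], ?_⟩
      intro k hk
      interval_cases k
      · show ‖((z+1 : GaussianInt):ℂ) - (z:ℂ)‖ = 1
        rw [e1, show (z:ℂ) + 1 - z = 1 from by ring]; simp
      · show ‖((z+1+ii : GaussianInt):ℂ) - ((z+1 : GaussianInt):ℂ)‖ = 1
        rw [e1, e2, show (z:ℂ) + 1 + Complex.I - ((z:ℂ)+1) = Complex.I from by ring]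
        simp
      · show ‖((z+ii : GaussianInt):ℂ) - ((z+1+ii : GaussianInt):ℂ)‖ = 1
        rw [e2, e3, show (z:ℂ) + Complex.I - ((z:ℂ)+1+Complex.I) = -1 from by ring]
        simp
      · show ‖((z : GaussianInt):ℂ) - ((z+ii : GaussianInt):ℂ)‖ = 1
        rw [e3, show (z:ℂ) - ((z:ℂ)+Complex.I) = -Complex.I from by ring]
        simp
    have h4 := h γ 4 z hpath
    rw [discInt, Finset.sum_range_succ, Finset.sum_range_succ, Finset.sum_range_succ,
      Finset.sum_range_succ, Finset.sum_range_zero] at h4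
    simp only [hγ] at h4
    norm_num at h4
    rw [coe_ii] at h4
    rw [div_eq_div_iff one_add_I_ne one_sub_I_ne]
    linear_combination (-2) * h4


end
end

section
/- Let f : Λ → ℂ be discrete analytic. Then for any z ∈ Λ and any two paths γ₁, γ₂ in Λ from 0 to z, ∫_{γ₁} f δz = ∫_{γ₂} f δz; consequently F(z) := ∫_0^z f δz (the integral taken along any path from 0 to z) is a well-defined function on Λ, and F is itself discrete analytic. -/
open Complex Finset GaussianInt

noncomputable section

namespace S1

def hstep (f : GaussianInt → ℂ) (z : GaussianInt) : ℂ := (f z + f (z+1))/2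
def vstep (f : GaussianInt → ℂ) (z : GaussianInt) : ℂ := ((f z + f (z+ii))/2) * Complex.I

lemma mk_add_one (x y : ℤ) : (⟨x,y⟩ : GaussianInt) + 1 = ⟨x+1, y⟩ := by
  simp [Zsqrtd.ext_iff]
lemma mk_add_ii (x y : ℤ) : (⟨x,y⟩ : GaussianInt) + ii = ⟨x, y+1⟩ := by
  simp [Zsqrtd.ext_iff, ii]
lemma eta (z : GaussianInt) : (⟨z.re, z.im⟩ : GaussianInt) = z := rfl

lemma hf' {f : GaussianInt → ℂ} (hf : DAnalytic f) (z : GaussianInt) :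
    (1 - Complex.I) * (f (z+1+ii) - f z) = (1 + Complex.I) * (f (z+1) - f (z+ii)) := by
  have h := hf z
  have h1 : (1 + Complex.I) ≠ 0 := by
    intro h; have := congrArg Complex.im h; simp at this
  have h2 : (1 - Complex.I) ≠ 0 := by
    intro h; have := congrArg Complex.im h; simp at this
  field_simp at h
  linear_combination h

lemma add_ii_one (z : GaussianInt) : z + ii + 1 = z + 1 + ii := by ring

lemma square {f : GaussianInt → ℂ} (hf : DAnalytic f) (z : GaussianInt) :
    hstep f (z+ii) + vstep f z = hstep f z + vstep f (z+1) := by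
  have h := hf' hf z
  simp only [hstep, vstep, add_ii_one]
  linear_combination h/2

lemma square' {f : GaussianInt → ℂ} (hf : DAnalytic f) (x y : ℤ) :
    hstep f ⟨x, y+1⟩ + vstep f ⟨x,y⟩ = hstep f ⟨x,y⟩ + vstep f ⟨x+1, y⟩ := by
  have h := square hf ⟨x, y⟩
  rwa [mk_add_ii, mk_add_one] at h

def zsum (g : ℤ → ℂ) : ℤ → ℂ := fun n =>
  if 0 ≤ n then ∑ k ∈ Finset.range n.toNat, g k
  else - ∑ k ∈ Finset.range (-n).toNat, g (-1 - k)

lemma zsum_succ (g : ℤ → ℂ) (n : ℤ) : zsum g (n+1) = zsum g n + g n := by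
  simp only [zsum]
  rcases le_or_gt 0 n with h | h
  · rw [if_pos (by omega : (0:ℤ) ≤ n + 1), if_pos h]
    have : (n+1).toNat = n.toNat + 1 := by omega
    rw [this, Finset.sum_range_succ, Int.toNat_of_nonneg h]
  · rw [if_neg (by omega : ¬ (0:ℤ) ≤ n)]
    rcases eq_or_lt_of_le (by omega : n + 1 ≤ 0) with h0 | h0
    · rw [if_pos (le_of_eq h0.symm)]
      have hn : (-n).toNat = 1 := by omega
      have h1 : (n+1).toNat = 0 := by omega
      rw [hn, h1, Finset.sum_range_one, Finset.range_zero, Finset.sum_empty]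
      have : (-1 - ((0:ℕ):ℤ)) = n := by omega
      rw [this]; ring
    · rw [if_neg (by omega : ¬ (0:ℤ) ≤ n + 1)]
      have hn : (-n).toNat = (-(n+1)).toNat + 1 := by omega
      rw [hn, Finset.sum_range_succ]
      have : (-1 - ((-(n+1)).toNat : ℤ)) = n := by omega
      rw [this]; ring

lemma zsum_zero (g : ℤ → ℂ) : zsum g 0 = 0 := by simp [zsum]

def Fpot (f : GaussianInt → ℂ) (z : GaussianInt) : ℂ :=
  zsum (fun t => hstep f ⟨t, 0⟩) z.re + zsum (fun t => vstep f ⟨z.re, t⟩) z.im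

lemma F_vstep (f : GaussianInt → ℂ) (z : GaussianInt) :
    Fpot f (z + ii) = Fpot f z + vstep f z := by
  rw [← eta z, mk_add_ii]
  simp only [Fpot, zsum_succ]
  ring

lemma key {f : GaussianInt → ℂ} (hf : DAnalytic f) (x : ℤ) (y : ℤ) :
    zsum (fun t => vstep f ⟨x+1, t⟩) y - zsum (fun t => vstep f ⟨x, t⟩) y
      = hstep f ⟨x,y⟩ - hstep f ⟨x,0⟩ := by
  induction y using Int.induction_on with
  | zero => simp [zsum_zero]
  | succ n ih =>
      rw [zsum_succ, zsum_succ]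
      have sq := square' hf x n
      linear_combination ih - sq
  | pred n ih =>
      have e1 := zsum_succ (fun t => vstep f ⟨x+1, t⟩) (-(n:ℤ)-1)
      have e2 := zsum_succ (fun t => vstep f ⟨x, t⟩) (-(n:ℤ)-1)
      have sq := square' hf x (-(n:ℤ)-1)
      rw [(by ring : (-(n:ℤ)-1+1) = -(n:ℤ))] at e1 e2 sq
      linear_combination ih - e1 + e2 + sq

lemma F_hstep {f : GaussianInt → ℂ} (hf : DAnalytic f) (z : GaussianInt) :
    Fpot f (z + 1) = Fpot f z + hstep f z := by
  have k := key hf z.re z.im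
  rw [← eta z, mk_add_one]
  simp only [Fpot]
  rw [zsum_succ]
  linear_combination k

lemma toComplex_ii : ((ii : GaussianInt) : ℂ) = Complex.I := by
  simp [ii, toComplex_def']

lemma div_helper (u v : ℂ) (h : (1 - Complex.I) * u = (1 + Complex.I) * v) :
    u / (1 + Complex.I) = v / (1 - Complex.I) := by
  have h1 : (1 + Complex.I) ≠ 0 := by
    intro h; have := congrArg Complex.im h; simp at this
  have h2 : (1 - Complex.I) ≠ 0 := by
    intro h; have := congrArg Complex.im h; simp at this
  field_simp
  linear_combination h

lemma F_analytic {f : GaussianInt → ℂ} (hf : DAnalytic f) : DAnalytic (Fpot f) := by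
  intro z
  have h1 : Fpot f (z+1+ii) = Fpot f z + hstep f z + vstep f (z+1) := by
    rw [F_vstep, F_hstep hf]
  have h2 : Fpot f (z+1) = Fpot f z + hstep f z := F_hstep hf z
  have h3 : Fpot f (z+ii) = Fpot f z + vstep f z := F_vstep f z
  rw [h1, h2, h3]
  apply div_helper
  have key := hf' hf z
  simp only [hstep, vstep]
  linear_combination Complex.I/2 * key

lemma unit_cases (w : GaussianInt) (h : ‖(w : ℂ)‖ = 1) :
    w = 1 ∨ w = -1 ∨ w = ii ∨ w = -ii := by
  have h1 : ‖(w:ℂ)‖ ^ 2 = 1 := by rw [h]; norm_num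
  rw [Complex.sq_norm, Complex.normSq_apply, ← GaussianInt.intCast_re,
    ← GaussianInt.intCast_im] at h1
  have hz : w.re * w.re + w.im * w.im = 1 := by exact_mod_cast h1
  obtain ⟨x, y⟩ := w
  simp only [Zsqrtd.ext_iff, ii] at *
  have hx : -1 ≤ x ∧ x ≤ 1 := by constructor <;> nlinarith
  have hy : -1 ≤ y ∧ y ≤ 1 := by constructor <;> nlinarith
  obtain ⟨hx1, hx2⟩ := hx
  obtain ⟨hy1, hy2⟩ := hy
  interval_cases x <;> interval_cases y <;> simp_all

lemma edge {f : GaussianInt → ℂ} (hf : DAnalytic f) {a b : GaussianInt}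
    (h : ‖(b:ℂ) - (a:ℂ)‖ = 1) :
    ((f a + f b) / 2) * ((b : ℂ) - (a:ℂ)) = Fpot f b - Fpot f a := by
  have hc : ((b:ℂ) - (a:ℂ)) = ((b - a : GaussianInt) : ℂ) := (toComplex_sub b a).symm
  have hw : ‖((b - a : GaussianInt) : ℂ)‖ = 1 := by rw [← hc]; exact h
  rcases unit_cases _ hw with h1 | h1 | h1 | h1
  · have hb : b = a + 1 := by linear_combination h1
    subst hb
    rw [F_hstep hf a, hc, h1, toComplex_one]
    simp only [hstep]; ring
  · have hb : a = b + 1 := by linear_combination -h1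
    subst hb
    rw [F_hstep hf b, hc, h1, toComplex_neg, toComplex_one]
    simp only [hstep]; ring
  · have hb : b = a + ii := by linear_combination h1
    subst hb
    rw [F_vstep f a, hc, h1, toComplex_ii]
    simp only [vstep]; ring
  · have hb : a = b + ii := by linear_combination -h1
    subst hb
    rw [F_vstep f b, hc, h1, toComplex_neg, toComplex_ii]
    simp only [vstep]; ring

lemma discInt_eq {f : GaussianInt → ℂ} (hf : DAnalytic f) (γ : ℕ → GaussianInt) (n : ℕ)
    {a b : GaussianInt} (h : IsPath γ n a b) : discInt f γ n = Fpot f b - Fpot f a := by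
  obtain ⟨h0, hn, hs⟩ := h
  rw [← h0, ← hn, discInt]
  rw [Finset.sum_congr rfl (fun k hk => edge hf (hs k (Finset.mem_range.mp hk)))]
  exact Finset.sum_range_sub (fun k => Fpot f (γ k)) n

lemma cpath_isPath (z : GaussianInt) : IsPath (cpath z) (cpathLen z) 0 z := by
  refine ⟨?_, ?_, ?_⟩
  · simp [cpath, Zsqrtd.ext_iff]
  · simp only [cpath, cpathLen, Zsqrtd.ext_iff]
    constructor
    · rw [min_eq_right (Nat.le_add_right _ _)]
      exact Int.sign_mul_natAbs z.re
    · rw [min_self, Nat.add_sub_cancel_left]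
      exact Int.sign_mul_natAbs z.im
  · intro k hk
    rw [cpathLen] at hk
    rcases lt_or_ge k z.re.natAbs with hk1 | hk1
    · have p1 : cpath z k = ⟨z.re.sign * k, 0⟩ := by
        simp [cpath, min_eq_left hk1.le, min_eq_left (show k ≤ z.re.natAbs + z.im.natAbs by omega),
          Nat.sub_eq_zero_of_le hk1.le]
      have p2 : cpath z (k+1) = ⟨z.re.sign * (k+1), 0⟩ := by
        simp [cpath, min_eq_left (show k+1 ≤ z.re.natAbs by omega),
          min_eq_left (show k+1 ≤ z.re.natAbs + z.im.natAbs by omega),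
          Nat.sub_eq_zero_of_le (show k+1 ≤ z.re.natAbs by omega)]
      have hd : (cpath z (k+1) : ℂ) - (cpath z k : ℂ) = ((z.re.sign : ℤ) : ℂ) := by
        rw [p1, p2, toComplex_def', toComplex_def']
        push_cast; ring
      have h0 : z.re ≠ 0 := by
        intro h; rw [h] at hk1; simp at hk1
      rw [hd]
      rcases h0.lt_or_gt with hl | hl
      · rw [Int.sign_eq_neg_one_iff_neg.mpr hl]; simp
      · rw [Int.sign_eq_one_iff_pos.mpr hl]; simp
    · have p1 : cpath z k = ⟨z.re.sign * z.re.natAbs, z.im.sign * (k - z.re.natAbs : ℕ)⟩ := by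
        simp [cpath, min_eq_right hk1, min_eq_left (le_of_lt hk)]
      have p2 : cpath z (k+1) =
          ⟨z.re.sign * z.re.natAbs, z.im.sign * ((k - z.re.natAbs : ℕ) + 1)⟩ := by
        have e1 : min (k+1) z.re.natAbs = z.re.natAbs := min_eq_right (by omega)
        have e2 : min (k+1) (z.re.natAbs + z.im.natAbs) = k+1 := min_eq_left (by omega)
        have e3 : k + 1 - z.re.natAbs = (k - z.re.natAbs) + 1 := by omega
        simp [cpath, e1, e2, e3]
      have hd : (cpath z (k+1) : ℂ) - (cpath z k : ℂ) = ((z.im.sign : ℤ) : ℂ) * Complex.I := by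
        rw [p1, p2, toComplex_def', toComplex_def']
        push_cast; ring
      have h0 : z.im ≠ 0 := by
        intro h; rw [h] at hk; simp at hk; omega
      rw [hd]
      rcases h0.lt_or_gt with hl | hl
      · rw [Int.sign_eq_neg_one_iff_neg.mpr hl]; simp
      · rw [Int.sign_eq_one_iff_pos.mpr hl]; simp

end S1

/-- For a discrete analytic `f`, the discrete integral from `0` to `z` is
path-independent; hence `F(z) = ∫₀ᶻ f δz` (computed along any path, e.g. the canonical one)
is well defined, and `F` is itself discrete analytic. -/
theorem stmt1 (f : GaussianInt → ℂ) (hf : DAnalytic f) :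
    (∀ (z : GaussianInt) (γ₁ γ₂ : ℕ → GaussianInt) (n₁ n₂ : ℕ),
        IsPath γ₁ n₁ 0 z → IsPath γ₂ n₂ 0 z → discInt f γ₁ n₁ = discInt f γ₂ n₂) ∧
    DAnalytic (fun z => discInt f (cpath z) (cpathLen z)) := by
  constructor
  · intro z γ₁ γ₂ n₁ n₂ h1 h2
    rw [S1.discInt_eq hf _ _ h1, S1.discInt_eq hf _ _ h2]
  · have hF : ∀ z, discInt f (cpath z) (cpathLen z) = S1.Fpot f z - S1.Fpot f 0 :=
      fun z => S1.discInt_eq hf _ _ (S1.cpath_isPath z)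
    intro z
    simp only [hF, sub_sub_sub_cancel_right]
    exact S1.F_analytic hf z

end
end

section
/- Let f : Λ → ℂ be discrete analytic. Then δx(Zf) = f, i.e., for every z ∈ Λ, (Zf)(z+1) − (Zf)(z) = f(z). -/
open Complex Finset GaussianInt

noncomputable section

-- auxiliary
def hstep (f : GaussianInt → ℂ) (z : GaussianInt) : ℂ := (f z + f (z + 1)) / 2
def vstep (f : GaussianInt → ℂ) (z : GaussianInt) : ℂ := ((f z + f (z + ii)) / 2) * Complex.I

def HInt (f : GaussianInt → ℂ) (a : ℤ) : ℂ :=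
  (∑ k ∈ Finset.range a.toNat, hstep f ⟨(k : ℤ), 0⟩)
  - ∑ k ∈ Finset.range (-a).toNat, hstep f ⟨-(k : ℤ) - 1, 0⟩

def VInt (f : GaussianInt → ℂ) (a b : ℤ) : ℂ :=
  (∑ k ∈ Finset.range b.toNat, vstep f ⟨a, (k : ℤ)⟩)
  - ∑ k ∈ Finset.range (-b).toNat, vstep f ⟨a, -(k : ℤ) - 1⟩

lemma gi_add_one (x y : ℤ) : (⟨x, y⟩ : GaussianInt) + 1 = ⟨x + 1, y⟩ := by
  ext <;> simp [Zsqrtd.ext_iff]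

lemma gi_add_ii (x y : ℤ) : (⟨x, y⟩ : GaussianInt) + ii = ⟨x, y + 1⟩ := by
  ext <;> simp [Zsqrtd.ext_iff, ii]

lemma square (f : GaussianInt → ℂ) (hf : DAnalytic f) (z : GaussianInt) :
    vstep f z + hstep f (z + ii) = hstep f z + vstep f (z + 1) := by
  have h1 : (1 + Complex.I) ≠ 0 := by
    intro h; have := congrArg Complex.im h; simpa using this
  have h2 : (1 - Complex.I) ≠ 0 := by
    intro h; have := congrArg Complex.im h; simpa using this
  have h := (div_eq_div_iff h1 h2).mp (hf z)
  have e1 : z + ii + 1 = z + 1 + ii := by ring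
  simp only [hstep, vstep, e1]
  linear_combination h / 2

lemma HInt_step (f : GaussianInt → ℂ) (a : ℤ) :
    HInt f (a + 1) = HInt f a + hstep f ⟨a, 0⟩ := by
  rcases le_or_gt 0 a with h | h
  · have h1 : (a + 1).toNat = a.toNat + 1 := by omega
    have h2 : (-(a + 1)).toNat = 0 := by omega
    have h3 : (-a).toNat = 0 := by omega
    have h4 : ((a.toNat : ℤ)) = a := by omega
    simp only [HInt]
    rw [h1, h2, h3, Finset.sum_range_succ, h4]
    simp
  · have h1 : (a + 1).toNat = 0 := by omega
    have h2 : a.toNat = 0 := by omega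
    have h3 : (-a).toNat = (-(a + 1)).toNat + 1 := by omega
    have h4 : (-(((-(a + 1)).toNat : ℕ) : ℤ) - 1) = a := by omega
    simp only [HInt]
    rw [h1, h2, h3, Finset.sum_range_succ, h4]
    simp

lemma VInt_step (f : GaussianInt → ℂ) (a b : ℤ) :
    VInt f a (b + 1) = VInt f a b + vstep f ⟨a, b⟩ := by
  rcases le_or_gt 0 b with h | h
  · have h1 : (b + 1).toNat = b.toNat + 1 := by omega
    have h2 : (-(b + 1)).toNat = 0 := by omega
    have h3 : (-b).toNat = 0 := by omega
    have h4 : ((b.toNat : ℤ)) = b := by omega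
    simp only [VInt]
    rw [h1, h2, h3, Finset.sum_range_succ, h4]
    simp
  · have h1 : (b + 1).toNat = 0 := by omega
    have h2 : b.toNat = 0 := by omega
    have h3 : (-b).toNat = (-(b + 1)).toNat + 1 := by omega
    have h4 : (-(((-(b + 1)).toNat : ℕ) : ℤ) - 1) = b := by omega
    simp only [VInt]
    rw [h1, h2, h3, Finset.sum_range_succ, h4]
    simp

lemma VInt_zero (f : GaussianInt → ℂ) (a : ℤ) : VInt f a 0 = 0 := by
  simp [VInt]

lemma column (f : GaussianInt → ℂ) (hf : DAnalytic f) (a b : ℤ) :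
    VInt f a b + hstep f ⟨a, b⟩ = hstep f ⟨a, 0⟩ + VInt f (a + 1) b := by
  induction b using Int.induction_on with
  | zero => simp [VInt_zero]
  | succ b ih =>
      have sq := square f hf ⟨a, (b : ℤ)⟩
      rw [gi_add_ii, gi_add_one] at sq
      rw [VInt_step, VInt_step]
      push_cast
      push_cast at ih sq
      linear_combination ih + sq
  | pred b ih =>
      have sq := square f hf ⟨a, (-b - 1 : ℤ)⟩
      rw [gi_add_ii, gi_add_one] at sq
      have e1 : (-b - 1 + 1 : ℤ) = -b := by ring
      rw [e1] at sq
      have v1 := VInt_step f a (-b - 1)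
      have v2 := VInt_step f (a + 1) (-b - 1)
      rw [e1] at v1 v2
      push_cast at ih sq v1 v2 ⊢
      linear_combination ih - sq - v1 + v2

lemma cpath_le (z : GaussianInt) {k : ℕ} (hk : k ≤ z.re.natAbs) :
    cpath z k = ⟨z.re.sign * k, 0⟩ := by
  have h1 : min k z.re.natAbs = k := min_eq_left hk
  have h2 : min k (z.re.natAbs + z.im.natAbs) = k := min_eq_left (by omega)
  simp [cpath, h1, h2, Nat.sub_eq_zero_of_le hk]

lemma cpath_ge (z : GaussianInt) {j : ℕ} (hj : j ≤ z.im.natAbs) :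
    cpath z (z.re.natAbs + j) = ⟨z.re, z.im.sign * j⟩ := by
  have h1 : min (z.re.natAbs + j) z.re.natAbs = z.re.natAbs := min_eq_right (by omega)
  have h2 : min (z.re.natAbs + j) (z.re.natAbs + z.im.natAbs) = z.re.natAbs + j :=
    min_eq_left (by omega)
  have h3 : z.re.natAbs + j - z.re.natAbs = j := by omega
  simp [cpath, h1, h2, h3, Int.sign_mul_abs]

lemma hsum (f : GaussianInt → ℂ) (z : GaussianInt) :
    ∑ k ∈ Finset.range z.re.natAbs,
      ((f (cpath z k) + f (cpath z (k + 1))) / 2) * ((cpath z (k + 1) : ℂ) - (cpath z k : ℂ))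
      = HInt f z.re := by
  rcases lt_trichotomy z.re 0 with h | h | h
  · have hs : z.re.sign = -1 := Int.sign_eq_neg_one_of_neg h
    have hm : z.re.toNat = 0 := by omega
    have hm' : (-z.re).toNat = z.re.natAbs := by omega
    rw [HInt, hm, hm']
    simp only [Finset.range_zero, Finset.sum_empty, zero_sub, ← Finset.sum_neg_distrib]
    refine Finset.sum_congr rfl fun k hk => ?_
    rw [Finset.mem_range] at hk
    rw [cpath_le z hk.le, cpath_le z hk, hs]
    have e1 : (⟨-1 * (k : ℤ), 0⟩ : GaussianInt) = ⟨-(k : ℤ) - 1, 0⟩ + 1 := by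
      rw [gi_add_one]; norm_num
    have e2 : (⟨-1 * ((k : ℕ) + 1 : ℕ), 0⟩ : GaussianInt) = ⟨-(k : ℤ) - 1, 0⟩ := by
      simp [Zsqrtd.ext_iff]; push_cast; ring
    rw [e1, e2, hstep, toComplex_def', toComplex_def', gi_add_one]
    push_cast
    ring
  · have hm : z.re.natAbs = 0 := by omega
    rw [hm, h]
    simp [HInt]
  · have hs : z.re.sign = 1 := Int.sign_eq_one_of_pos h
    have hm : z.re.toNat = z.re.natAbs := by omega
    have hm' : (-z.re).toNat = 0 := by omega
    rw [HInt, hm, hm']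
    simp only [Finset.range_zero, Finset.sum_empty, sub_zero]
    refine Finset.sum_congr rfl fun k hk => ?_
    rw [Finset.mem_range] at hk
    rw [cpath_le z hk.le, cpath_le z hk, hs]
    have e2 : (⟨1 * ((k : ℕ) + 1 : ℕ), 0⟩ : GaussianInt) = ⟨(k : ℤ), 0⟩ + 1 := by
      rw [gi_add_one]; simp [Zsqrtd.ext_iff]
    have e1 : (⟨1 * (k : ℤ), 0⟩ : GaussianInt) = ⟨(k : ℤ), 0⟩ := by
      simp [Zsqrtd.ext_iff]
    rw [e1, e2, hstep, gi_add_one, toComplex_def', toComplex_def']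
    push_cast
    ring

lemma vsum (f : GaussianInt → ℂ) (z : GaussianInt) :
    ∑ j ∈ Finset.range z.im.natAbs,
      ((f (cpath z (z.re.natAbs + j)) + f (cpath z (z.re.natAbs + j + 1))) / 2) *
        ((cpath z (z.re.natAbs + j + 1) : ℂ) - (cpath z (z.re.natAbs + j) : ℂ))
      = VInt f z.re z.im := by
  rcases lt_trichotomy z.im 0 with h | h | h
  · have hs : z.im.sign = -1 := Int.sign_eq_neg_one_of_neg h
    have hm : z.im.toNat = 0 := by omega
    have hm' : (-z.im).toNat = z.im.natAbs := by omega
    rw [VInt, hm, hm']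
    simp only [Finset.range_zero, Finset.sum_empty, zero_sub, ← Finset.sum_neg_distrib]
    refine Finset.sum_congr rfl fun j hj => ?_
    rw [Finset.mem_range] at hj
    have r1 : z.re.natAbs + j + 1 = z.re.natAbs + (j + 1) := by omega
    rw [r1, cpath_ge z hj.le, cpath_ge z hj, hs]
    have e1 : (⟨z.re, -1 * (j : ℤ)⟩ : GaussianInt) = ⟨z.re, -(j : ℤ) - 1⟩ + ii := by
      rw [gi_add_ii]; norm_num
    have e2 : (⟨z.re, -1 * ((j : ℕ) + 1 : ℕ)⟩ : GaussianInt) = ⟨z.re, -(j : ℤ) - 1⟩ := by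
      simp [Zsqrtd.ext_iff]; push_cast; ring
    rw [e1, e2, vstep, toComplex_def', toComplex_def', gi_add_ii]
    push_cast
    ring
  · have hm : z.im.natAbs = 0 := by omega
    rw [hm, h]
    simp [VInt]
  · have hs : z.im.sign = 1 := Int.sign_eq_one_of_pos h
    have hm : z.im.toNat = z.im.natAbs := by omega
    have hm' : (-z.im).toNat = 0 := by omega
    rw [VInt, hm, hm']
    simp only [Finset.range_zero, Finset.sum_empty, sub_zero]
    refine Finset.sum_congr rfl fun j hj => ?_
    rw [Finset.mem_range] at hj
    have r1 : z.re.natAbs + j + 1 = z.re.natAbs + (j + 1) := by omega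
    rw [r1, cpath_ge z hj.le, cpath_ge z hj, hs]
    have e2 : (⟨z.re, 1 * ((j : ℕ) + 1 : ℕ)⟩ : GaussianInt) = ⟨z.re, (j : ℤ)⟩ + ii := by
      rw [gi_add_ii]; simp [Zsqrtd.ext_iff]
    have e1 : (⟨z.re, 1 * (j : ℤ)⟩ : GaussianInt) = ⟨z.re, (j : ℤ)⟩ := by
      simp [Zsqrtd.ext_iff]
    rw [e1, e2, vstep, gi_add_ii, toComplex_def', toComplex_def']
    push_cast
    ring

lemma discInt_cpath (f : GaussianInt → ℂ) (z : GaussianInt) :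
    discInt f (cpath z) (cpathLen z) = HInt f z.re + VInt f z.re z.im := by
  rw [discInt, cpathLen, Finset.sum_range_add]
  rw [hsum f z]
  congr 1
  rw [← vsum f z]


/-- For discrete analytic `f`, `δx (Zf) = f`. -/
theorem stmt3 (f : GaussianInt → ℂ) (hf : DAnalytic f) :
    ∀ z : GaussianInt, Zop f (z + 1) - Zop f z = f z := by
  intro z
  simp only [Zop]
  rw [discInt_cpath, discInt_cpath]
  have e1 : (z + 1).re = z.re + 1 := by simp
  have e2 : (z + 1).im = z.im := by simp
  rw [e1, e2, HInt_step]
  have col := column f hf z.re z.im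
  rw [show (⟨z.re, z.im⟩ : GaussianInt) = z from rfl] at col
  rw [hstep] at col
  linear_combination -col

end
end

section
/- For every z ∈ Λ and every t ∈ ℂ with |t| < 1, the series Σ_{n=0}^∞ tⁿ z^{(n)}(z) converges absolutely and its sum equals G_z(t) = (1+t)^{Re z} ((1+α₊t)/(1+α₋t))^{Im z}. -/
open Complex Finset GaussianInt

noncomputable section

/-- The generating function `G_z(t) = (1+t)^{Re z} ((1+α₊t)/(1+α₋t))^{Im z}`. -/
def genF (z : GaussianInt) (t : ℂ) : ℂ :=
  (1 + t) ^ z.re * ((1 + aPlus * t) / (1 + aMinus * t)) ^ z.im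

-- ### Auxiliary lemmas ###

lemma cpath_self (z : GaussianInt) : cpath z (cpathLen z) = z := by
  unfold cpath cpathLen
  have h1 : min (z.re.natAbs + z.im.natAbs) z.re.natAbs = z.re.natAbs := by omega
  have h2 : (min (z.re.natAbs + z.im.natAbs) (z.re.natAbs + z.im.natAbs)
      - z.re.natAbs : ℕ) = z.im.natAbs := by omega
  rw [h1, h2]
  ext <;> simp [Int.sign_mul_natAbs, Int.sign_mul_abs]

lemma Zop_step (f : GaussianInt → ℂ) {z z' : GaussianInt}
    (hlen : cpathLen z' = cpathLen z + 1)
    (hext : ∀ k, k ≤ cpathLen z → cpath z' k = cpath z k) :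
    Zop f z' = Zop f z + (f z - f z') / 2 + ((f z + f z') / 2) * ((z' : ℂ) - (z : ℂ)) := by
  have hD : discInt f (cpath z') (cpathLen z') =
      discInt f (cpath z) (cpathLen z) + ((f z + f z') / 2) * ((z' : ℂ) - (z : ℂ)) := by
    rw [hlen]
    unfold discInt
    rw [Finset.sum_range_succ]
    have hlast1 : cpath z' (cpathLen z) = z := by rw [hext _ le_rfl, cpath_self]
    have hlast2 : cpath z' (cpathLen z + 1) = z' := by rw [← hlen, cpath_self]
    rw [hlast1, hlast2]
    congr 1
    apply Finset.sum_congr rfl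
    intro k hk
    rw [Finset.mem_range] at hk
    rw [hext k (by omega), hext (k+1) (by omega)]
  unfold Zop
  rw [hD]
  ring

lemma Zop_up (f : GaussianInt → ℂ) (z : GaussianInt) (hy : 0 ≤ z.im) :
    Zop f (z + ii) = Zop f z + aPlus * f z - aMinus * f (z + ii) := by
  have h1 : (z + ii).re = z.re := by simp [ii]
  have h2 : (z + ii).im = z.im + 1 := by simp [ii]
  have hlen : cpathLen (z + ii) = cpathLen z + 1 := by unfold cpathLen; rw [h1, h2]; omega
  have hext : ∀ k, k ≤ cpathLen z → cpath (z + ii) k = cpath z k := by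
    intro k hk
    unfold cpathLen at hk
    unfold cpath
    rw [h1, h2]
    ext
    · rfl
    · show (z.im + 1).sign * _ = z.im.sign * _
      rcases hy.lt_or_eq with h | h
      · rw [Int.sign_eq_one_of_pos (by omega), Int.sign_eq_one_of_pos h]
        congr 2
        omega
      · rw [Int.sign_eq_one_of_pos (by omega), show z.im.sign = 0 by rw [← h]; rfl]
        simp only [one_mul, zero_mul, Nat.cast_eq_zero]
        omega
  have hI : ((z + ii : GaussianInt) : ℂ) = (z : ℂ) + Complex.I := by
    rw [toComplex_add]
    congr 1
    simp [ii, toComplex_def']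
  rw [Zop_step f hlen hext, hI, aPlus, aMinus]
  ring

lemma Zop_down (f : GaussianInt → ℂ) (z : GaussianInt) (hy : z.im ≤ 0) :
    Zop f (z - ii) = Zop f z + aMinus * f z - aPlus * f (z - ii) := by
  have h1 : (z - ii).re = z.re := by simp [ii]
  have h2 : (z - ii).im = z.im - 1 := by simp [ii]
  have hlen : cpathLen (z - ii) = cpathLen z + 1 := by unfold cpathLen; rw [h1, h2]; omega
  have hext : ∀ k, k ≤ cpathLen z → cpath (z - ii) k = cpath z k := by
    intro k hk
    unfold cpathLen at hk
    unfold cpath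
    rw [h1, h2]
    ext
    · rfl
    · show (z.im - 1).sign * _ = z.im.sign * _
      rcases hy.lt_or_eq with h | h
      · rw [Int.sign_eq_neg_one_of_neg (by omega), Int.sign_eq_neg_one_of_neg h]
        congr 2
        omega
      · rw [Int.sign_eq_neg_one_of_neg (by omega), show z.im.sign = 0 by rw [h]; rfl]
        simp only [neg_one_mul, zero_mul, neg_eq_zero, Nat.cast_eq_zero]
        omega
  have hI : ((z - ii : GaussianInt) : ℂ) = (z : ℂ) - Complex.I := by
    rw [toComplex_sub]
    congr 1
    simp [ii, toComplex_def']
  rw [Zop_step f hlen hext, hI, aPlus, aMinus]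
  ring

lemma Zop_right (f : GaussianInt → ℂ) (z : GaussianInt) (hx : 0 ≤ z.re) (hy : z.im = 0) :
    Zop f (z + 1) = Zop f z + f z := by
  have h1 : (z + 1).re = z.re + 1 := by simp
  have h2 : (z + 1).im = z.im := by simp
  have hlen : cpathLen (z + 1) = cpathLen z + 1 := by unfold cpathLen; rw [h1, h2]; omega
  have hext : ∀ k, k ≤ cpathLen z → cpath (z + 1) k = cpath z k := by
    intro k hk
    unfold cpathLen at hk
    unfold cpath
    rw [h1, h2]
    ext
    · show (z.re + 1).sign * _ = z.re.sign * _
      rcases hx.lt_or_eq with h | h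
      · rw [Int.sign_eq_one_of_pos (by omega), Int.sign_eq_one_of_pos h]
        congr 2
        omega
      · rw [Int.sign_eq_one_of_pos (by omega), show z.re.sign = 0 by rw [← h]; rfl]
        simp only [one_mul, zero_mul, Nat.cast_eq_zero]
        omega
    · show z.im.sign * _ = z.im.sign * _
      rw [hy]
      simp
  have hI : ((z + 1 : GaussianInt) : ℂ) = (z : ℂ) + 1 := by
    rw [toComplex_add, toComplex_one]
  rw [Zop_step f hlen hext, hI]
  ring

lemma Zop_left (f : GaussianInt → ℂ) (z : GaussianInt) (hx : z.re ≤ 0) (hy : z.im = 0) :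
    Zop f (z - 1) = Zop f z - f (z - 1) := by
  have h1 : (z - 1).re = z.re - 1 := by simp
  have h2 : (z - 1).im = z.im := by simp
  have hlen : cpathLen (z - 1) = cpathLen z + 1 := by unfold cpathLen; rw [h1, h2]; omega
  have hext : ∀ k, k ≤ cpathLen z → cpath (z - 1) k = cpath z k := by
    intro k hk
    unfold cpathLen at hk
    unfold cpath
    rw [h1, h2]
    ext
    · show (z.re - 1).sign * _ = z.re.sign * _
      rcases hx.lt_or_eq with h | h
      · rw [Int.sign_eq_neg_one_of_neg (by omega), Int.sign_eq_neg_one_of_neg h]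
        congr 2
        omega
      · rw [Int.sign_eq_neg_one_of_neg (by omega), show z.re.sign = 0 by rw [h]; rfl]
        simp only [neg_one_mul, zero_mul, neg_eq_zero, Nat.cast_eq_zero]
        omega
    · show z.im.sign * _ = z.im.sign * _
      rw [hy]
      simp
  have hI : ((z - 1 : GaussianInt) : ℂ) = (z : ℂ) - 1 := by
    rw [toComplex_sub, toComplex_one]
  rw [Zop_step f hlen hext, hI]
  ring

lemma Zop_zero (f : GaussianInt → ℂ) : Zop f 0 = 0 := by
  have h : cpathLen 0 = 0 := by unfold cpathLen; simp
  unfold Zop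
  rw [h]
  unfold discInt
  simp

lemma zpoly_succ (n : ℕ) (z : GaussianInt) : zpoly (n + 1) z = Zop (zpoly n) z := by
  unfold zpoly
  rw [Function.iterate_succ_apply']

lemma zpoly_zero' (z : GaussianInt) : zpoly 0 z = 1 := rfl

lemma zpoly_at_zero (n : ℕ) : zpoly (n + 1) 0 = 0 := by
  rw [zpoly_succ, Zop_zero]

lemma one_add_mul_ne {β t : ℂ} (hβ : ‖β‖ ≤ 1) (ht : ‖t‖ < 1) : 1 + β * t ≠ 0 := by
  intro h
  have h1 : β * t = -1 := by linear_combination h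
  have h2 : ‖β * t‖ = 1 := by rw [h1]; simp
  have h3 : ‖β * t‖ ≤ ‖t‖ := by
    rw [norm_mul]
    calc ‖β‖ * ‖t‖ ≤ 1 * ‖t‖ := mul_le_mul_of_nonneg_right hβ (_root_.norm_nonneg t)
      _ = ‖t‖ := one_mul _
  linarith

def cseq (α β : ℂ) : ℕ → ℂ
  | 0 => 1
  | (m + 1) => (α - β) * (-β) ^ m

lemma stepSeries {t α β : ℂ} (ht : ‖t‖ < 1) (hα : ‖α‖ ≤ 1) (hβ : ‖β‖ ≤ 1)
    {a b : ℕ → ℂ} {A : ℂ}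
    (h0 : b 0 = a 0) (hrec : ∀ n, b (n + 1) = a (n + 1) + α * a n - β * b n)
    (hS : Summable fun n => ‖t ^ n * a n‖) (hA : HasSum (fun n => t ^ n * a n) A) :
    (Summable fun n => ‖t ^ n * b n‖) ∧
      HasSum (fun n => t ^ n * b n) (A * ((1 + α * t) / (1 + β * t))) := by
  classical
  set c : ℕ → ℂ := cseq α β with hc
  have hc0 : c 0 = 1 := rfl
  have hcsucc : ∀ m, c (m + 1) = α * (if m = 0 then 1 else 0) - β * c m := by
    intro m
    rcases Nat.eq_zero_or_pos m with h | h
    · subst h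
      show (α - β) * (-β) ^ 0 = _
      rw [hc0]
      norm_num
    · obtain ⟨j, rfl⟩ : ∃ j, m = j + 1 := ⟨m - 1, by omega⟩
      show (α - β) * (-β) ^ (j + 1) = α * 0 - β * ((α - β) * (-β) ^ j)
      ring
  have hbc : ∀ n, b n = ∑ k ∈ range (n + 1), c (n - k) * a k := by
    intro n
    induction n with
    | zero => simpa [hc0] using h0
    | succ n ih =>
      rw [hrec n, ih]
      rw [Finset.sum_range_succ (f := fun k => c (n + 1 - k) * a k)]
      have step : ∀ k ∈ range (n + 1), c (n + 1 - k) * a k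
          = α * ((if n - k = 0 then 1 else 0) * a k) - β * (c (n - k) * a k) := by
        intro k hk
        rw [Finset.mem_range] at hk
        rw [show n + 1 - k = (n - k) + 1 by omega, hcsucc]
        ring
      rw [Finset.sum_congr rfl step, Finset.sum_sub_distrib, ← Finset.mul_sum, ← Finset.mul_sum]
      have delta : ∑ k ∈ range (n + 1), (if n - k = 0 then 1 else 0) * a k = a n := by
        rw [Finset.sum_eq_single n]
        · simp
        · intro k hk hkn
          rw [Finset.mem_range] at hk
          rw [if_neg (by omega)]
          simp
        · intro h
          exact absurd (Finset.self_mem_range_succ n) h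
      rw [delta, show n + 1 - (n + 1) = 0 by omega, hc0]
      ring
  have key : ∀ n, t ^ n * b n
      = ∑ k ∈ range (n + 1), (t ^ k * c k) * (t ^ (n - k) * a (n - k)) := by
    intro n
    rw [hbc n, ← Finset.sum_range_reflect (fun k => c (n - k) * a k) (n + 1), Finset.mul_sum]
    apply Finset.sum_congr rfl
    intro k hk
    rw [Finset.mem_range] at hk
    rw [show n + 1 - 1 - k = n - k by omega, show n - (n - k) = k by omega]
    rw [show (t ^ n : ℂ) = t ^ k * t ^ (n - k) by rw [← pow_add]; congr 1; omega]
    ring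
  have hβt : ‖β * t‖ < 1 := by
    rw [norm_mul]
    calc ‖β‖ * ‖t‖ ≤ 1 * ‖t‖ := mul_le_mul_of_nonneg_right hβ (_root_.norm_nonneg t)
      _ = ‖t‖ := one_mul _
      _ < 1 := ht
  have hne : (1 : ℂ) + β * t ≠ 0 := one_add_mul_ne hβ ht
  have hcS : Summable fun m => ‖t ^ m * c m‖ := by
    have hle : ∀ m, ‖t ^ m * c m‖ ≤ 2 * ‖t‖ ^ m := by
      intro m
      rcases Nat.eq_zero_or_pos m with h | h
      · subst h; norm_num [hc0]
      · obtain ⟨j, rfl⟩ : ∃ j, m = j + 1 := ⟨m - 1, by omega⟩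
        show ‖t ^ (j + 1) * ((α - β) * (-β) ^ j)‖ ≤ _
        rw [norm_mul, norm_mul, norm_pow, norm_pow, norm_neg]
        have h1 : ‖α - β‖ ≤ 2 := by
          calc ‖α - β‖ ≤ ‖α‖ + ‖β‖ := norm_sub_le _ _
            _ ≤ 2 := by linarith
        have h2 : ‖β‖ ^ j ≤ 1 := pow_le_one₀ (_root_.norm_nonneg _) hβ
        have h3 : ‖α - β‖ * ‖β‖ ^ j ≤ 2 * 1 :=
          mul_le_mul h1 h2 (pow_nonneg (_root_.norm_nonneg _) _) (by norm_num)
        nlinarith [pow_nonneg (_root_.norm_nonneg t) (j + 1)]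
    exact Summable.of_nonneg_of_le (fun m => _root_.norm_nonneg _) hle
      ((summable_geometric_of_lt_one (_root_.norm_nonneg t) ht).mul_left 2)
  have hcsum : HasSum (fun m => t ^ m * c m) ((1 + α * t) / (1 + β * t)) := by
    have hgeo : HasSum (fun m : ℕ => (-(β * t)) ^ m) (1 - (-(β * t)))⁻¹ :=
      hasSum_geometric_of_norm_lt_one (by rwa [norm_neg])
    have hshift : HasSum (fun m => t ^ (m + 1) * c (m + 1))
        ((α - β) * t * (1 - (-(β * t)))⁻¹) := by
      have h := hgeo.mul_left ((α - β) * t)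
      convert h using 2 with m
      show t ^ (m + 1) * ((α - β) * (-β) ^ m) = _
      rw [neg_pow (β * t), mul_pow, neg_pow β]
      ring
      rfl
    have h2 := (hasSum_nat_add_iff (f := fun m => t ^ m * c m) 1).mp hshift
    convert h2 using 1
    rfl
    simp only [Finset.range_one, Finset.sum_singleton, pow_zero, one_mul, hc0, mul_one]
    rw [sub_neg_eq_add]
    rw [div_eq_iff hne, add_mul, mul_assoc ((α - β) * t), inv_mul_cancel₀ hne]
    ring
  constructor
  · have h := summable_norm_sum_mul_range_of_summable_norm hcS hS
    apply h.congr
    intro n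
    rw [← key n]
  · have hprod := hasSum_sum_range_mul_of_summable_norm hcS hS
    rw [hcsum.tsum_eq, hA.tsum_eq] at hprod
    rw [show (fun n => t ^ n * b n)
        = fun n => ∑ k ∈ range (n + 1), (t ^ k * c k) * (t ^ (n - k) * a (n - k))
        from funext key]
    convert hprod using 1
    rfl
    ring

lemma norm_aPlus_le : ‖aPlus‖ ≤ 1 := by
  rw [aPlus, norm_div]
  have h2 : ‖(2 : ℂ)‖ = 2 := by norm_num
  rw [h2, div_le_one (by norm_num)]
  calc ‖1 + Complex.I‖ ≤ ‖(1 : ℂ)‖ + ‖Complex.I‖ := norm_add_le _ _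
    _ ≤ 2 := by norm_num

lemma norm_aMinus_le : ‖aMinus‖ ≤ 1 := by
  rw [aMinus, norm_div]
  have h2 : ‖(2 : ℂ)‖ = 2 := by norm_num
  rw [h2, div_le_one (by norm_num)]
  calc ‖1 - Complex.I‖ ≤ ‖(1 : ℂ)‖ + ‖Complex.I‖ := norm_sub_le _ _
    _ ≤ 2 := by norm_num


/-- For every `z ∈ Λ` and `|t| < 1` the series `Σ tⁿ z⁽ⁿ⁾(z)` converges
absolutely with sum `G_z(t)`. -/
theorem stmt8 (z : GaussianInt) (t : ℂ) (ht : ‖t‖ < 1) :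
    Summable (fun n : ℕ => ‖t ^ n * zpoly n z‖) ∧
    HasSum (fun n : ℕ => t ^ n * zpoly n z) (genF z t) := by
  have h1t : (1 : ℂ) + t ≠ 0 := by
    have h := one_add_mul_ne (β := 1) (by norm_num) ht
    rwa [one_mul] at h
  have hPt : (1 : ℂ) + aPlus * t ≠ 0 := one_add_mul_ne norm_aPlus_le ht
  have hMt : (1 : ℂ) + aMinus * t ≠ 0 := one_add_mul_ne norm_aMinus_le ht
  have hR : (1 + aPlus * t) / (1 + aMinus * t) ≠ 0 := div_ne_zero hPt hMt
  have haxis : ∀ x : ℤ, (Summable fun n : ℕ => ‖t ^ n * zpoly n ⟨x, 0⟩‖) ∧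
      HasSum (fun n : ℕ => t ^ n * zpoly n ⟨x, 0⟩) (genF ⟨x, 0⟩ t) := by
    intro x
    induction x using Int.induction_on with
    | zero =>
      have hz0 : (⟨0, 0⟩ : GaussianInt) = 0 := rfl
      rw [hz0]
      have hfun : (fun n : ℕ => t ^ n * zpoly n 0) = fun n => if n = 0 then 1 else 0 := by
        funext n
        cases n with
        | zero => simp [zpoly_zero']
        | succ m => simp [zpoly_at_zero]
      have hg : genF 0 t = 1 := by
        show (1 + t) ^ (0 : ℤ) * ((1 + aPlus * t) / (1 + aMinus * t)) ^ (0 : ℤ) = 1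
        simp
      constructor
      · apply summable_of_ne_finset_zero (s := ({0} : Finset ℕ))
        intro n hn
        simp only [Finset.mem_singleton] at hn
        obtain ⟨m, rfl⟩ : ∃ m, n = m + 1 := ⟨n - 1, by omega⟩
        simp [zpoly_at_zero]
      · rw [hfun, hg]
        exact hasSum_ite_eq 0 1
    | succ n ih =>
      have hpt : (⟨(n : ℤ), 0⟩ : GaussianInt) + 1 = ⟨(n : ℤ) + 1, 0⟩ := by ext <;> simp
      have hrec : ∀ m, zpoly (m + 1) ⟨(n : ℤ) + 1, 0⟩
          = zpoly (m + 1) ⟨(n : ℤ), 0⟩ + 1 * zpoly m ⟨(n : ℤ), 0⟩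
            - 0 * zpoly m ⟨(n : ℤ) + 1, 0⟩ := by
        intro m
        rw [← hpt, zpoly_succ, Zop_right (zpoly m) _ (by simp) rfl, ← zpoly_succ]
        ring
      have H := stepSeries (α := 1) (β := 0) (a := fun m => zpoly m ⟨(n : ℤ), 0⟩)
        (b := fun m => zpoly m ⟨(n : ℤ) + 1, 0⟩) ht (by norm_num) (by norm_num) rfl hrec ih.1 ih.2
      have hg : genF ⟨(n : ℤ) + 1, 0⟩ t = genF ⟨(n : ℤ), 0⟩ t * ((1 + 1 * t) / (1 + 0 * t)) := by
        show (1 + t) ^ ((n : ℤ) + 1) * ((1 + aPlus * t) / (1 + aMinus * t)) ^ (0 : ℤ)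
          = (1 + t) ^ (n : ℤ) * ((1 + aPlus * t) / (1 + aMinus * t)) ^ (0 : ℤ)
            * ((1 + 1 * t) / (1 + 0 * t))
        rw [zpow_zero, zpow_add_one₀ h1t]
        field_simp
        ring
      rw [hg]
      exact H
    | pred n ih =>
      have hpt : (⟨-(n : ℤ), 0⟩ : GaussianInt) - 1 = ⟨-(n : ℤ) - 1, 0⟩ := by ext <;> simp
      have hrec : ∀ m, zpoly (m + 1) ⟨-(n : ℤ) - 1, 0⟩
          = zpoly (m + 1) ⟨-(n : ℤ), 0⟩ + 0 * zpoly m ⟨-(n : ℤ), 0⟩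
            - 1 * zpoly m ⟨-(n : ℤ) - 1, 0⟩ := by
        intro m
        rw [← hpt, zpoly_succ, Zop_left (zpoly m) _ (by simp) rfl, ← zpoly_succ, hpt]
        ring
      have H := stepSeries (α := 0) (β := 1) (a := fun m => zpoly m ⟨-(n : ℤ), 0⟩)
        (b := fun m => zpoly m ⟨-(n : ℤ) - 1, 0⟩) ht (by norm_num) (by norm_num) rfl hrec ih.1 ih.2
      have hg : genF ⟨-(n : ℤ) - 1, 0⟩ t
          = genF ⟨-(n : ℤ), 0⟩ t * ((1 + 0 * t) / (1 + 1 * t)) := by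
        show (1 + t) ^ (-(n : ℤ) - 1) * ((1 + aPlus * t) / (1 + aMinus * t)) ^ (0 : ℤ)
          = (1 + t) ^ (-(n : ℤ)) * ((1 + aPlus * t) / (1 + aMinus * t)) ^ (0 : ℤ)
            * ((1 + 0 * t) / (1 + 1 * t))
        rw [zpow_zero, zpow_sub_one₀ h1t]
        field_simp
        ring
      rw [hg]
      exact H
  obtain ⟨x, y⟩ := z
  induction y using Int.induction_on with
  | zero => exact haxis x
  | succ n ih =>
    have hpt : (⟨x, (n : ℤ)⟩ : GaussianInt) + ii = ⟨x, (n : ℤ) + 1⟩ := by ext <;> simp [ii]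
    have hrec : ∀ m, zpoly (m + 1) ⟨x, (n : ℤ) + 1⟩
        = zpoly (m + 1) ⟨x, (n : ℤ)⟩ + aPlus * zpoly m ⟨x, (n : ℤ)⟩
          - aMinus * zpoly m ⟨x, (n : ℤ) + 1⟩ := by
      intro m
      rw [← hpt, zpoly_succ, Zop_up (zpoly m) _ (by simp), ← zpoly_succ, hpt]
    have H := stepSeries (α := aPlus) (β := aMinus) (a := fun m => zpoly m ⟨x, (n : ℤ)⟩)
      (b := fun m => zpoly m ⟨x, (n : ℤ) + 1⟩) ht norm_aPlus_le norm_aMinus_le rfl hrec ih.1 ih.2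
    have hg : genF ⟨x, (n : ℤ) + 1⟩ t
        = genF ⟨x, (n : ℤ)⟩ t * ((1 + aPlus * t) / (1 + aMinus * t)) := by
      show (1 + t) ^ x * ((1 + aPlus * t) / (1 + aMinus * t)) ^ ((n : ℤ) + 1)
        = (1 + t) ^ x * ((1 + aPlus * t) / (1 + aMinus * t)) ^ (n : ℤ)
          * ((1 + aPlus * t) / (1 + aMinus * t))
      rw [zpow_add_one₀ hR]
      ring
    rw [hg]
    exact H
  | pred n ih =>
    have hpt : (⟨x, -(n : ℤ)⟩ : GaussianInt) - ii = ⟨x, -(n : ℤ) - 1⟩ := by ext <;> simp [ii]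
    have hrec : ∀ m, zpoly (m + 1) ⟨x, -(n : ℤ) - 1⟩
        = zpoly (m + 1) ⟨x, -(n : ℤ)⟩ + aMinus * zpoly m ⟨x, -(n : ℤ)⟩
          - aPlus * zpoly m ⟨x, -(n : ℤ) - 1⟩ := by
      intro m
      rw [← hpt, zpoly_succ, Zop_down (zpoly m) _ (by simp), ← zpoly_succ, hpt]
    have H := stepSeries (α := aMinus) (β := aPlus) (a := fun m => zpoly m ⟨x, -(n : ℤ)⟩)
      (b := fun m => zpoly m ⟨x, -(n : ℤ) - 1⟩) ht norm_aMinus_le norm_aPlus_le rfl hrec ih.1 ih.2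
    have hg : genF ⟨x, -(n : ℤ) - 1⟩ t
        = genF ⟨x, -(n : ℤ)⟩ t * ((1 + aMinus * t) / (1 + aPlus * t)) := by
      show (1 + t) ^ x * ((1 + aPlus * t) / (1 + aMinus * t)) ^ (-(n : ℤ) - 1)
        = (1 + t) ^ x * ((1 + aPlus * t) / (1 + aMinus * t)) ^ (-(n : ℤ))
          * ((1 + aMinus * t) / (1 + aPlus * t))
      rw [zpow_sub_one₀ hR, inv_div]
      ring
    rw [hg]
    exact H

end
end

section
/- For every n ∈ ℕ and every z ∈ Λ, z^{(n)}(conj z) = conj(z^{(n)}(z)); in particular, z^{(n)}(x) is real for every x ∈ ℤ. -/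
open Complex Finset GaussianInt

noncomputable section

lemma toC_conj (z : GaussianInt) :
    ((⟨z.re, -z.im⟩ : GaussianInt) : ℂ) = (starRingEnd ℂ) (z : ℂ) := by
  apply Complex.ext <;> simp [GaussianInt.re_toComplex, GaussianInt.im_toComplex]

lemma cpath_conj (z : GaussianInt) (k : ℕ) :
    cpath ⟨z.re, -z.im⟩ k = ⟨(cpath z k).re, -(cpath z k).im⟩ := by
  simp [cpath, Zsqrtd.ext_iff]

lemma cpathLen_conj (z : GaussianInt) : cpathLen ⟨z.re, -z.im⟩ = cpathLen z := by
  simp [cpathLen]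

lemma Zop_conj (f : GaussianInt → ℂ)
    (hf : ∀ z : GaussianInt, f ⟨z.re, -z.im⟩ = (starRingEnd ℂ) (f z)) :
    ∀ z : GaussianInt, Zop f ⟨z.re, -z.im⟩ = (starRingEnd ℂ) (Zop f z) := by
  have h0 : f 0 = (starRingEnd ℂ) (f 0) := by
    have := hf 0
    exact this
  intro z
  unfold Zop discInt
  rw [cpathLen_conj]
  rw [map_add, map_div₀, map_sub, map_sum]
  congr 1
  · rw [← h0, hf z, map_ofNat]
  · apply Finset.sum_congr rfl
    intro k _
    rw [map_mul, map_div₀, map_add, map_sub]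
    rw [cpath_conj, cpath_conj, hf, hf, toC_conj, toC_conj, map_ofNat]

lemma zpoly_conj (n : ℕ) (z : GaussianInt) :
    zpoly n ⟨z.re, -z.im⟩ = (starRingEnd ℂ) (zpoly n z) := by
  induction n generalizing z with
  | zero => simp [zpoly]
  | succ n ih =>
    have : zpoly (n + 1) = Zop (zpoly n) := by
      simp [zpoly, Function.iterate_succ_apply']
    rw [this]
    exact Zop_conj (zpoly n) ih z

/-- `z⁽ⁿ⁾(z̄) = conj (z⁽ⁿ⁾(z))`; in particular `z⁽ⁿ⁾` is real on `ℤ`. -/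
theorem stmt11 :
    (∀ (n : ℕ) (z : GaussianInt),
        zpoly n ⟨z.re, -z.im⟩ = (starRingEnd ℂ) (zpoly n z)) ∧
    ∀ (n : ℕ) (x : ℤ), (zpoly n ⟨x, 0⟩).im = 0 := by
  refine ⟨zpoly_conj, fun n x => ?_⟩
  have := zpoly_conj n ⟨x, 0⟩
  simp only [show ((⟨x, 0⟩ : GaussianInt)).re = x from rfl,
    show ((⟨x, 0⟩ : GaussianInt)).im = (0 : ℤ) from rfl, neg_zero] at this
  have h2 := congrArg Complex.im this
  simpa using (by linarith [h2, Complex.conj_im (zpoly n ⟨x, 0⟩)] : (zpoly n ⟨x, 0⟩).im = 0)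

end
end
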